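/- Let X be a metric space and G a group of isometries of X. Let P, Q ⊆ X be finite sets, and suppose that for each p ∈ P there is ε_p > 0 such that the orbit G·p is not ε_p-bounded (i.e., G·p admits no finite ε_p-net). Then there exists g ∈ G such that for every p ∈ P, the distance d(g·p, Q) ≥ ε_p/3. -/
import Mathlib


/-- `S` is `ε`-bounded if it is covered by finitely many open `ε`-balls. -/
def EBounded {X : Type*} [MetricSpace X] (S : Set X) (ε : ℝ) : Prop :=
  ∃ F : Finset X, S ⊆ ⋃ x ∈ F, Metric.ball x ε

/-- Key covering lemma (metric analogue of B. H. Neumann's coset covering argument):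
if `G` is covered by finitely many sets of the form `{g : d(g•p, x) < δ p}` with the
first coordinates lying in a finite set `P'`, then some `p ∈ P'` has `3 * δ p`-bounded
orbit. Induction on `P'`. -/
theorem metric_neumann_aux {X G : Type*} [MetricSpace X] [Group G] [MulAction G X]
    (hiso : ∀ (g : G) (x y : X), dist (g • x) (g • y) = dist x y)
    (δ : X → ℝ) (P' : Finset X) :
    ∀ C : Finset (X × X), (∀ c ∈ C, c.1 ∈ P') →
      (∀ g : G, ∃ c ∈ C, dist (g • c.1) c.2 < δ c.1) →
      ∃ p ∈ P', EBounded (MulAction.orbit G p) (3 * δ p) := by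
  classical
  induction P' using Finset.induction_on with
  | empty =>
    intro C hC hcov
    obtain ⟨c, hc, -⟩ := hcov 1
    exact absurd (hC c hc) (Finset.notMem_empty _)
  | @insert a s ha IH =>
    intro C hC hcov
    by_cases hb : EBounded (MulAction.orbit G a) (3 * δ a)
    · exact ⟨a, Finset.mem_insert_self a s, hb⟩
    -- find g₀ whose orbit point is ≥ 3δa from all targets attached to a
    have hns : ¬ (MulAction.orbit G a ⊆
        ⋃ x ∈ (C.filter (fun c => c.1 = a)).image Prod.snd, Metric.ball x (3 * δ a)) :=
      fun h => hb ⟨_, h⟩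
    obtain ⟨y, hy, hy2⟩ := Set.not_subset.mp hns
    obtain ⟨g₀, rfl⟩ := MulAction.mem_orbit_iff.mp hy
    have hg₀ : ∀ c ∈ C, c.1 = a → 3 * δ a ≤ dist (g₀ • a) c.2 := by
      intro c hc hca
      by_contra hlt
      push_neg at hlt
      exact hy2 (Set.mem_biUnion
        (Finset.mem_image.mpr ⟨c, Finset.mem_filter.mpr ⟨hc, hca⟩, rfl⟩)
        (Metric.mem_ball.mpr hlt))
    -- witness function for approximate cosets attached to a
    let w : X × X → G := fun c =>
      if h : ∃ g : G, dist (g • a) c.2 < δ a then h.choose else 1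
    have hw : ∀ c : X × X, (∃ g : G, dist (g • a) c.2 < δ a) →
        dist ((w c) • a) c.2 < δ a := by
      intro c h
      simp only [w, dif_pos h]
      exact h.choose_spec
    let D : Finset (X × X) := C.filter (fun c => c.1 ≠ a)
    let C' : Finset (X × X) := D ∪ (C.filter (fun c => c.1 = a)).biUnion
      (fun c => D.image (fun d => (d.1, (w c) • g₀⁻¹ • d.2)))
    have hDmem : ∀ d ∈ D, d.1 ∈ s := by
      intro d hd
      obtain ⟨hdC, hdne⟩ := Finset.mem_filter.mp hd
      rcases Finset.mem_insert.mp (hC d hdC) with h | h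
      · exact absurd h hdne
      · exact h
    have hC' : ∀ c ∈ C', c.1 ∈ s := by
      intro c hc
      rcases Finset.mem_union.mp hc with h | h
      · exact hDmem c h
      · obtain ⟨c₀, -, hc₀⟩ := Finset.mem_biUnion.mp h
        obtain ⟨d, hd, rfl⟩ := Finset.mem_image.mp hc₀
        exact hDmem d hd
    have hcov' : ∀ g : G, ∃ c ∈ C', dist (g • c.1) c.2 < δ c.1 := by
      intro g
      obtain ⟨c, hc, hgc⟩ := hcov g
      by_cases hca : c.1 = a
      · rw [hca] at hgc
        have hex : ∃ g' : G, dist (g' • a) c.2 < δ a := ⟨g, hgc⟩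
        set h := w c with hhdef
        have hh : dist (h • a) c.2 < δ a := hw c hex
        -- the element g₁ = g₀ * h⁻¹ * g
        set g₁ : G := g₀ * h⁻¹ * g with hg₁def
        obtain ⟨c', hc', hg1⟩ := hcov g₁
        have hc'ne : c'.1 ≠ a := by
          intro hc'a
          rw [hc'a] at hg1
          have e1 : dist (g₁ • a) (g₀ • a) = dist (g • a) (h • a) := by
            have : g₁ • a = g₀ • (h⁻¹ * g) • a := by
              rw [hg₁def, mul_assoc, mul_smul]
            rw [this, hiso g₀, mul_smul, ← hiso h, smul_inv_smul]
          have e2 : dist (g • a) (h • a) < 2 * δ a := by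
            calc dist (g • a) (h • a) ≤ dist (g • a) c.2 + dist c.2 (h • a) :=
                  dist_triangle _ _ _
              _ < δ a + δ a := by
                  rw [dist_comm c.2]
                  exact add_lt_add hgc hh
              _ = 2 * δ a := by ring
          have e3 : dist (g₀ • a) c'.2 < 3 * δ a := by
            calc dist (g₀ • a) c'.2 ≤ dist (g₀ • a) (g₁ • a) + dist (g₁ • a) c'.2 :=
                  dist_triangle _ _ _
              _ < 2 * δ a + δ a := by
                  rw [dist_comm (g₀ • a), e1]
                  exact add_lt_add e2 hg1
              _ = 3 * δ a := by ring
          exact absurd (hg₀ c' hc' hc'a) (not_le.mpr e3)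
        have hc'D : c' ∈ D := Finset.mem_filter.mpr ⟨hc', hc'ne⟩
        refine ⟨(c'.1, h • g₀⁻¹ • c'.2), ?_, ?_⟩
        · exact Finset.mem_union_right _ (Finset.mem_biUnion.mpr
            ⟨c, Finset.mem_filter.mpr ⟨hc, hca⟩,
              Finset.mem_image.mpr ⟨c', hc'D, rfl⟩⟩)
        · show dist (g • c'.1) (h • g₀⁻¹ • c'.2) < δ c'.1
          have key : g • c'.1 = (h * g₀⁻¹) • g₁ • c'.1 := by
            rw [← mul_smul]
            congr 1
            rw [hg₁def]
            group
          rw [key, ← mul_smul h g₀⁻¹ c'.2, hiso]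
          exact hg1
      · refine ⟨c, Finset.mem_union_left _ (Finset.mem_filter.mpr ⟨hc, hca⟩), hgc⟩
    obtain ⟨p, hp, hbd⟩ := IH C' hC' hcov'
    exact ⟨p, Finset.mem_insert_of_mem hp, hbd⟩

/-- Metric-space P. M. Neumann Lemma (Lemma 3.1): if `G` acts on `X` by isometries,
`P, Q ⊆ X` are finite, and for each `p ∈ P` the orbit of `p` is not `ε p`-bounded
(with `ε p > 0`), then some `g ∈ G` satisfies `d(g•p, Q) ≥ ε p / 3` for all `p ∈ P`. -/
theorem metric_pm_neumann {X G : Type*} [MetricSpace X] [Group G] [MulAction G X]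
    (hiso : ∀ (g : G) (x y : X), dist (g • x) (g • y) = dist x y)
    (P Q : Finset X) (ε : X → ℝ)
    (hP : ∀ p ∈ P, 0 < ε p ∧ ¬ EBounded (MulAction.orbit G p) (ε p)) :
    ∃ g : G, ∀ p ∈ P, ∀ q ∈ Q, ε p / 3 ≤ dist (g • p) q := by
  by_contra hcon
  push_neg at hcon
  obtain ⟨p, hp, hbd⟩ := metric_neumann_aux hiso (fun p => ε p / 3) P (P ×ˢ Q)
    (fun c hc => (Finset.mem_product.mp hc).1)
    (by
      intro g
      obtain ⟨p, hp, q, hq, hlt⟩ := hcon g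
      exact ⟨(p, q), Finset.mem_product.mpr ⟨hp, hq⟩, hlt⟩)
  have h3 : 3 * (ε p / 3) = ε p := by ring
  rw [h3] at hbd
  exact (hP p hp).2 hbd
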